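/- arXiv:1607.00339 — 3 statements merged into one kernel-verified Lean document; each statement's English description precedes it below -/
import Mathlib

section
/- Let (P_m)_{m≥1} be a bounded polynomial sequence. Then for all 0 ≤ m ≤ n, the preimage Q_{m,n}⁻¹(𝒥_n) equals 𝒥_m, and the image Q_{m,n}(𝒥_m) equals 𝒥_n. -/
open Filter

/-- `Qcomp P m n z` is the value at `z` of the composition
`Q_{m,n} = P_n ∘ ⋯ ∘ P_{m+1}` (with `Q_{m,m} = id`). -/
noncomputable def Qcomp (P : ℕ → Polynomial ℂ) (m n : ℕ) (z : ℂ) : ℂ :=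
  (List.range (n - m)).foldl (fun w k => (P (m + k + 1)).eval w) z

/-- A bounded polynomial sequence with bounds `d`, `K`, `M`. -/
def IsBoundedPolySeq (d : ℕ) (K M : ℝ) (P : ℕ → Polynomial ℂ) : Prop :=
  ∀ m, 1 ≤ m →
    2 ≤ (P m).natDegree ∧ (P m).natDegree ≤ d ∧
    1 / K ≤ ‖(P m).leadingCoeff‖ ∧
    ‖(P m).leadingCoeff‖ ≤ K ∧
    ∀ k, k < (P m).natDegree → ‖(P m).coeff k‖ ≤ M

/-- The `m`-th iterated filled Julia set. -/
def filledJulia (P : ℕ → Polynomial ℂ) (m : ℕ) : Set ℂ :=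
  {z | ∃ C : ℝ, ∀ n, m ≤ n → ‖Qcomp P m n z‖ ≤ C}

/-- The `m`-th iterated basin of attraction of infinity. -/
def basinInfty (P : ℕ → Polynomial ℂ) (m : ℕ) : Set ℂ :=
  {z | Tendsto (fun n => ‖Qcomp P m n z‖) atTop atTop}

/-- The `m`-th iterated Julia set. -/
def juliaSet (P : ℕ → Polynomial ℂ) (m : ℕ) : Set ℂ :=
  frontier (filledJulia P m)

/-! Auxiliary lemmas -/

lemma Qcomp_self (P : ℕ → Polynomial ℂ) (m : ℕ) (z : ℂ) : Qcomp P m m z = z := by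
  simp [Qcomp]

lemma Qcomp_succ (P : ℕ → Polynomial ℂ) {m n : ℕ} (h : m ≤ n) (z : ℂ) :
    Qcomp P m (n + 1) z = (P (n + 1)).eval (Qcomp P m n z) := by
  have h1 : n + 1 - m = (n - m) + 1 := by omega
  have h2 : m + (n - m) + 1 = n + 1 := by omega
  simp [Qcomp, h1, List.range_succ, h2]

lemma Qcomp_comp (P : ℕ → Polynomial ℂ) {m n k : ℕ} (hmn : m ≤ n) (hnk : n ≤ k) (z : ℂ) :
    Qcomp P m k z = Qcomp P n k (Qcomp P m n z) := by
  induction k, hnk using Nat.le_induction with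
  | base => rw [Qcomp_self]
  | succ k hk ih =>
    rw [Qcomp_succ P (hmn.trans hk), Qcomp_succ P hk, ih]

noncomputable def Qpoly (P : ℕ → Polynomial ℂ) (m n : ℕ) : Polynomial ℂ :=
  (List.range (n - m)).foldl (fun q k => (P (m + k + 1)).comp q) Polynomial.X

lemma Qpoly_eval_aux (P : ℕ → Polynomial ℂ) (m : ℕ) (l : List ℕ) (q : Polynomial ℂ) (z : ℂ) :
    (l.foldl (fun q k => (P (m + k + 1)).comp q) q).eval z
      = l.foldl (fun w k => (P (m + k + 1)).eval w) (q.eval z) := by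
  induction l generalizing q with
  | nil => rfl
  | cons a t ih => simp [List.foldl_cons, ih, Polynomial.eval_comp]

lemma Qpoly_eval (P : ℕ → Polynomial ℂ) (m n : ℕ) (z : ℂ) :
    (Qpoly P m n).eval z = Qcomp P m n z := by
  have := Qpoly_eval_aux P m (List.range (n - m)) Polynomial.X z
  rw [Polynomial.eval_X] at this
  exact this

lemma Qpoly_succ (P : ℕ → Polynomial ℂ) {m n : ℕ} (h : m ≤ n) :
    Qpoly P m (n + 1) = (P (n + 1)).comp (Qpoly P m n) := by
  have h1 : n + 1 - m = (n - m) + 1 := by omega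
  have h2 : m + (n - m) + 1 = n + 1 := by omega
  simp [Qpoly, h1, List.range_succ, h2]

lemma Qpoly_natDegree_pos (d : ℕ) (K M : ℝ) (P : ℕ → Polynomial ℂ)
    (hP : IsBoundedPolySeq d K M P) {m n : ℕ} (hmn : m ≤ n) :
    1 ≤ (Qpoly P m n).natDegree := by
  induction n, hmn using Nat.le_induction with
  | base => simp [Qpoly, Polynomial.natDegree_X]
  | succ n hn ih =>
    rw [Qpoly_succ P hn, Polynomial.natDegree_comp]
    have h2 := (hP (n + 1) (Nat.le_add_left 1 n)).1
    nlinarith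

/-- For a bounded polynomial sequence and `m ≤ n`,
`Q_{m,n}⁻¹(𝒥_n) = 𝒥_m` and `Q_{m,n}(𝒥_m) = 𝒥_n`. -/
theorem juliaSet_invariance (d : ℕ) (hd : 2 ≤ d) (K M : ℝ) (hK : 1 ≤ K) (hM : 0 ≤ M)
    (P : ℕ → Polynomial ℂ) (hP : IsBoundedPolySeq d K M P) (m n : ℕ) (hmn : m ≤ n) :
    (fun z => Qcomp P m n z) ⁻¹' juliaSet P n = juliaSet P m ∧
    (fun z => Qcomp P m n z) '' juliaSet P m = juliaSet P n := by
  set f : ℂ → ℂ := fun z => Qcomp P m n z with hf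
  have hfeval : f = fun z => (Qpoly P m n).eval z := by
    funext z; rw [Qpoly_eval]
  have hdeg : 1 ≤ (Qpoly P m n).natDegree := Qpoly_natDegree_pos d K M P hP hmn
  have hcont : Continuous f := by
    rw [hfeval]; exact (Qpoly P m n).continuous
  -- f is an open map
  have hopen : IsOpenMap f := by
    have han : AnalyticOnNhd ℂ f Set.univ := by
      intro z _
      rw [hfeval]
      exact AnalyticOnNhd.eval_polynomial (𝕜 := ℂ) (Qpoly P m n) z (Set.mem_univ z)
    rcases han.is_constant_or_isOpen isPreconnected_univ with ⟨w, hw⟩ | h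
    · exfalso
      have : Qpoly P m n = Polynomial.C w := by
        apply Polynomial.funext
        intro r
        have h := hw r (Set.mem_univ r)
        rw [hfeval] at h
        simpa using h
      rw [this] at hdeg
      simp at hdeg
    · intro s hs
      exact h s (Set.subset_univ s) hs
  -- f is surjective
  have hsurj : Function.Surjective f := by
    intro w
    have hdegpos : 0 < (Qpoly P m n - Polynomial.C w).degree := by
      rw [Polynomial.degree_sub_C]
      · exact_mod_cast Polynomial.natDegree_pos_iff_degree_pos.mp hdeg
      · exact_mod_cast Polynomial.natDegree_pos_iff_degree_pos.mp hdeg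
    obtain ⟨z, hz⟩ := Complex.exists_root hdegpos
    refine ⟨z, ?_⟩
    have := hz
    simp only [Polynomial.IsRoot, Polynomial.eval_sub, Polynomial.eval_C, sub_eq_zero] at this
    rw [hfeval]; exact this
  -- filledJulia equality
  have hfill : f ⁻¹' filledJulia P n = filledJulia P m := by
    ext z
    constructor
    · rintro ⟨C, hC⟩
      classical
      refine ⟨max C ((Finset.Icc m n).sup' (Finset.nonempty_Icc.mpr hmn)
        (fun k => ‖Qcomp P m k z‖)), ?_⟩
      intro j hj
      rcases le_or_gt n j with h | h
      · calc ‖Qcomp P m j z‖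
            = ‖Qcomp P n j (f z)‖ := by rw [Qcomp_comp P hmn h]
          _ ≤ C := hC j h
          _ ≤ _ := le_max_left _ _
      · refine le_trans ?_ (le_max_right _ _)
        exact Finset.le_sup' (fun k => ‖Qcomp P m k z‖)
          (Finset.mem_Icc.mpr ⟨hj, h.le⟩)
    · rintro ⟨C, hC⟩
      refine ⟨C, fun j hj => ?_⟩
      rw [← Qcomp_comp P hmn hj]
      exact hC j (hmn.trans hj)
  have hfront : f ⁻¹' juliaSet P n = juliaSet P m := by
    rw [juliaSet, juliaSet, ← hfill]
    exact hopen.preimage_frontier_eq_frontier_preimage hcont _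
  refine ⟨hfront, ?_⟩
  rw [← hfront, Set.image_preimage_eq _ hsurj]
end

section
/- Let d ≥ 2 be an integer, let a ≠ b be points of ℝ/ℤ, let ℓ = ℓ(a,b), and suppose d·a ≠ d·b (equivalently, d·ℓ is not an integer). Then for every y ∈ ℝ/ℤ, the number of points x in the open arc (a,b) with d·x = y equals ⌊dℓ⌋ + 1 if y lies in the open arc (d·a, d·b), and equals ⌊dℓ⌋ otherwise. -/
set_option maxHeartbeats 1000000

/-- The unique representative in `[0,1)` of `b - a`; for `a ≠ b` this is the
unique representative of `b − a` in `(0,1)`, the length `ℓ(a,b)` of the arc from `a` to `b`. -/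
noncomputable def arcLen (a b : UnitAddCircle) : ℝ :=
  ((AddCircle.equivIco 1 0) (b - a) : ℝ)

/-- The open arc `(a,b) = {a + t : 0 < t < ℓ(a,b)}` in `ℝ/ℤ`. -/
def openArc (a b : UnitAddCircle) : Set UnitAddCircle :=
  {x | ∃ t : ℝ, 0 < t ∧ t < arcLen a b ∧ x = a + (t : UnitAddCircle)}

lemma coe_rep (z : UnitAddCircle) : (((AddCircle.equivIco 1 0) z : ℝ) : UnitAddCircle) = z :=
  (AddCircle.equivIco 1 0).symm_apply_apply z

lemma rep_coe (r : ℝ) : ((AddCircle.equivIco 1 0) ((r : ℝ) : UnitAddCircle) : ℝ) = Int.fract r := by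
  have := AddCircle.coe_equivIco_mk_apply (p := 1) r
  simpa using this

lemma rep_mem (z : UnitAddCircle) : ((AddCircle.equivIco 1 0) z : ℝ) ∈ Set.Ico (0:ℝ) 1 := by
  have := ((AddCircle.equivIco 1 0) z).2
  simpa using this

lemma coe_smul (n : ℕ) (r : ℝ) : n • ((r : ℝ) : UnitAddCircle) = (((n * r : ℝ)) : UnitAddCircle) := by
  rw [← AddCircle.coe_nsmul]; norm_num [nsmul_eq_mul]

lemma coe_zero_iff (r : ℝ) : ((r : ℝ) : UnitAddCircle) = 0 ↔ ∃ n : ℤ, (n : ℝ) = r := by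
  rw [AddCircle.coe_eq_zero_iff]; simp

/-- Let `d ≥ 2`, `a ≠ b` in `ℝ/ℤ`, `ℓ = ℓ(a,b)`, and suppose `d·a ≠ d·b`.
Then for every `y`, the number of `x` in the open arc `(a,b)` with `d·x = y`
is `⌊dℓ⌋ + 1` if `y ∈ (d·a, d·b)` and `⌊dℓ⌋` otherwise. -/
theorem count_preimages_in_arc (d : ℕ) (hd : 2 ≤ d) (a b : UnitAddCircle) (hab : a ≠ b)
    (h : d • a ≠ d • b) (y : UnitAddCircle) :
    (y ∈ openArc (d • a) (d • b) →
      {x | x ∈ openArc a b ∧ d • x = y}.ncard = ⌊(d : ℝ) * arcLen a b⌋₊ + 1) ∧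
    (y ∉ openArc (d • a) (d • b) →
      {x | x ∈ openArc a b ∧ d • x = y}.ncard = ⌊(d : ℝ) * arcLen a b⌋₊) := by
  have hd0 : (0:ℝ) < d := by positivity
  set ℓ : ℝ := arcLen a b with hldef
  have hl_mem : ℓ ∈ Set.Ico (0:ℝ) 1 := rep_mem _
  have hlcoe : ((ℓ : ℝ) : UnitAddCircle) = b - a := coe_rep _
  have hl1 : ℓ < 1 := hl_mem.2
  have hl0 : 0 < ℓ := by
    rcases hl_mem.1.lt_or_eq with h' | h'
    · exact h'
    · exfalso; apply hab
      have : ((ℓ : ℝ) : UnitAddCircle) = 0 := by rw [← h']; norm_num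
      rw [hlcoe] at this
      exact (sub_eq_zero.mp this).symm
  set s : ℝ := ((AddCircle.equivIco 1 0) (y - d • a) : ℝ) with hsdef
  have hs_mem : s ∈ Set.Ico (0:ℝ) 1 := rep_mem _
  have hscoe : ((s : ℝ) : UnitAddCircle) = y - d • a := coe_rep _
  have hs0 : 0 ≤ s := hs_mem.1
  have hs1 : s < 1 := hs_mem.2
  -- d * ℓ is not an integer
  have hdba : d • b - d • a = (((d : ℝ) * ℓ : ℝ) : UnitAddCircle) := by
    rw [← coe_smul, hlcoe, smul_sub]
  have hirr : ∀ n : ℤ, (n : ℝ) ≠ (d : ℝ) * ℓ := by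
    intro n hn
    apply h
    have : d • b - d • a = 0 := by
      rw [hdba, ← hn]
      exact (coe_zero_iff _).mpr ⟨n, rfl⟩
    exact (sub_eq_zero.mp this).symm
  have hdl0 : 0 < (d : ℝ) * ℓ := by positivity
  set f : ℝ := Int.fract ((d : ℝ) * ℓ) with hfdef
  have harc2 : arcLen (d • a) (d • b) = f := by
    rw [arcLen, hdba, rep_coe]
  have hf0 : 0 < f := by
    rcases (Int.fract_nonneg ((d:ℝ) * ℓ)).lt_or_eq with h' | h'
    · exact h'
    · exfalso
      exact hirr ⌊(d:ℝ) * ℓ⌋ (by have := Int.self_sub_fract ((d:ℝ)*ℓ); rw [← h'] at this; linarith)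
  have hf1 : f < 1 := Int.fract_lt_one _
  have hfloor : ((⌊(d : ℝ) * ℓ⌋₊ : ℝ)) = (d : ℝ) * ℓ - f := by
    rw [natCast_floor_eq_intCast_floor hdl0.le, hfdef, Int.self_sub_fract]
  -- membership of y in the image arc
  have hymem : y ∈ openArc (d • a) (d • b) ↔ 0 < s ∧ s < f := by
    constructor
    · rintro ⟨u, hu0, hu1, hy⟩
      rw [harc2] at hu1
      have hus : s = u := by
        have : y - d • a = ((u : ℝ) : UnitAddCircle) := by rw [hy]; abel
        rw [hsdef, this, rep_coe, Int.fract_eq_self.mpr ⟨hu0.le, lt_trans hu1 hf1⟩]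
      rw [hus]; exact ⟨hu0, hu1⟩
    · rintro ⟨h1, h2⟩
      refine ⟨s, h1, by rwa [harc2], ?_⟩
      rw [hscoe]; abel
  clear_value ℓ s f
  -- the counting set
  set F : ℕ → UnitAddCircle := fun k => a + (((s + (k : ℝ)) / d : ℝ) : UnitAddCircle) with hF
  set K : Set ℕ := {k | 0 < s + (k : ℝ) ∧ (k : ℝ) < (d : ℝ) * ℓ - s} with hK
  clear_value F K
  have hset : {x | x ∈ openArc a b ∧ d • x = y} = F '' K := by
    ext x
    simp only [Set.mem_setOf_eq, Set.mem_image, hK, hF]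
    constructor
    · rintro ⟨⟨t, ht0, ht1, hx⟩, hdx⟩
      have ht1' : t < ℓ := hldef ▸ ht1
      have hdx' : (((d : ℝ) * t : ℝ) : UnitAddCircle) = ((s : ℝ) : UnitAddCircle) := by
        rw [hscoe]
        rw [hx, smul_add, coe_smul] at hdx
        rw [← hdx]; abel
      have : ((((d : ℝ) * t - s : ℝ)) : UnitAddCircle) = 0 := by
        rw [AddCircle.coe_sub, hdx', sub_self]
      obtain ⟨m, hm⟩ := (coe_zero_iff _).mp this
      have hm0 : 0 ≤ m := by
        by_contra hneg
        push_neg at hneg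
        have : (m : ℝ) ≤ -1 := by exact_mod_cast Int.le_of_lt_add_one (by simpa using hneg)
        nlinarith [mul_pos hd0 ht0]
      have hmk : ((m.toNat : ℝ)) = (m : ℝ) := by exact_mod_cast Int.toNat_of_nonneg hm0
      refine ⟨m.toNat, ⟨?_, ?_⟩, ?_⟩
      · rw [hmk, hm]
        nlinarith [mul_pos hd0 ht0]
      · rw [hmk, hm]
        nlinarith [mul_lt_mul_of_pos_left ht1' hd0]
      · rw [hx]
        have htt : t = (s + (m.toNat : ℝ)) / d := by
          rw [hmk, hm]
          field_simp
          ring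
        rw [← htt]
    · rintro ⟨k, ⟨hk1, hk2⟩, hx⟩
      have hknn : (0:ℝ) ≤ (k:ℝ) := Nat.cast_nonneg k
      set t : ℝ := (s + (k : ℝ)) / d with ht
      have ht0 : 0 < t := div_pos hk1 hd0
      have htl : t < ℓ := by rw [ht, div_lt_iff₀ hd0]; nlinarith
      have hdt : (d : ℝ) * t = s + k := by rw [ht]; field_simp
      constructor
      · exact ⟨t, ht0, by rwa [← hldef], hx.symm⟩
      · rw [← hx, smul_add, coe_smul, hdt, AddCircle.coe_add]
        have hk0 : (((k : ℝ)) : UnitAddCircle) = 0 := (coe_zero_iff _).mpr ⟨k, by push_cast; ring⟩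
        rw [hk0, add_zero, hscoe]
        abel
  have hinj : Set.InjOn F K := by
    intro k hk k' hk' hEq
    simp only [hK, Set.mem_setOf_eq] at hk hk'
    have hkd : (k : ℝ) < d := by nlinarith [hk.2]
    have hkd' : (k' : ℝ) < d := by nlinarith [hk'.2]
    have h1 : (((s + (k:ℝ))/d : ℝ) : UnitAddCircle) = (((s + (k':ℝ))/d : ℝ) : UnitAddCircle) := by
      have hEq' := hEq
      rw [hF] at hEq'
      exact add_left_cancel hEq'
    have h2 : ((((s + (k:ℝ))/d - (s + (k':ℝ))/d : ℝ)) : UnitAddCircle) = 0 := by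
      rw [AddCircle.coe_sub, h1, sub_self]
    obtain ⟨m, hm⟩ := (coe_zero_iff _).mp h2
    have hm' : (m : ℝ) * d = (k : ℝ) - k' := by
      field_simp at hm
      linarith
    have habs : |(m : ℝ)| < 1 := by
      rw [abs_lt]
      constructor <;> nlinarith
    have hm0 : m = 0 := by
      have h1 : |m| < 1 := by exact_mod_cast habs
      exact Int.abs_lt_one_iff.mp h1
    rw [hm0] at hm'
    have : (k : ℝ) = k' := by push_cast at hm'; linarith
    exact_mod_cast this
  have hIio : ∀ n : ℕ, (Set.Iio n).ncard = n := by
    intro n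
    rw [← Finset.coe_range, Set.ncard_coe_finset, Finset.card_range]
  have hcard_pos : 0 < s → K = Set.Iio ⌈(d:ℝ)*ℓ - s⌉₊ := by
    intro hspos
    ext k
    simp only [hK, Set.mem_setOf_eq, Set.mem_Iio, Nat.lt_ceil]
    exact ⟨fun h => h.2, fun h => ⟨add_pos_of_pos_of_nonneg hspos (Nat.cast_nonneg k), h⟩⟩
  constructor
  · intro hy
    obtain ⟨hspos, hsf⟩ := hymem.mp hy
    rw [hset, Set.ncard_image_of_injOn hinj, hcard_pos hspos, hIio]
    rw [Nat.ceil_eq_iff (Nat.add_one_ne_zero _)]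
    constructor
    · simp only [Nat.add_sub_cancel]
      rw [hfloor]; linarith
    · push_cast
      linarith [Nat.lt_floor_add_one ((d:ℝ)*ℓ)]
  · intro hy
    rw [hymem] at hy
    push_neg at hy
    rcases hs0.eq_or_lt with hs0' | hspos
    · -- s = 0
      have hKeq : K = ↑(Finset.Ico 1 ⌈(d:ℝ)*ℓ⌉₊) := by
        ext k
        simp only [hK, Set.mem_setOf_eq, Finset.coe_Ico, Set.mem_Ico, Nat.lt_ceil, ← hs0',
          zero_add, sub_zero]
        constructor
        · rintro ⟨h1, h2⟩
          have : 0 < k := by exact_mod_cast h1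
          exact ⟨this, h2⟩
        · rintro ⟨h1, h2⟩
          exact ⟨by exact_mod_cast Nat.pos_of_ne_zero (by omega), h2⟩
      rw [hset, Set.ncard_image_of_injOn hinj, hKeq, Set.ncard_coe_finset, Nat.card_Ico]
      have hceil : ⌈(d:ℝ)*ℓ⌉₊ = ⌊(d:ℝ)*ℓ⌋₊ + 1 := by
        rw [Nat.ceil_eq_iff (Nat.add_one_ne_zero _)]
        constructor
        · simp only [Nat.add_sub_cancel]
          rw [hfloor]; linarith
        · push_cast
          linarith [Nat.lt_floor_add_one ((d:ℝ)*ℓ)]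
      rw [hceil]
      simp
    · -- 0 < s and f ≤ s
      have hfs : f ≤ s := hy hspos
      rw [hset, Set.ncard_image_of_injOn hinj, hcard_pos hspos, hIio]
      by_cases hn : ⌊(d:ℝ)*ℓ⌋₊ = 0
      · rw [hn, Nat.ceil_eq_zero]
        have h0 : (0:ℝ) = (d:ℝ)*ℓ - f := by rw [← hfloor, hn]; simp
        linarith
      · rw [Nat.ceil_eq_iff hn]
        have h1 : 1 ≤ ⌊(d:ℝ)*ℓ⌋₊ := Nat.one_le_iff_ne_zero.mpr hn
        constructor
        · have hc : ((⌊(d:ℝ)*ℓ⌋₊ - 1 : ℕ) : ℝ) = (⌊(d:ℝ)*ℓ⌋₊ : ℝ) - 1 := by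
            push_cast [h1]
            ring
          rw [hc, hfloor]
          linarith
        · rw [hfloor]
          linarith
end

section
/- Let (A_m)_{m≥0} be a formal orbit portrait of valence N ≥ 2 with degrees (d_m)_{m≥1}, let m ≥ 0, and let (a,b) be a complementary arc of A_m of length ℓ. Then d_{m+1}·a ≠ d_{m+1}·b (so d_{m+1}·ℓ is not an integer), the open arc (d_{m+1}·a, d_{m+1}·b) is a complementary arc of A_{m+1}, and its length equals d_{m+1}ℓ − ⌊d_{m+1}ℓ⌋. -/
/-- `(a,b,c)` is in positive cyclic order: `ℓ(a,b) < ℓ(a,c)`. -/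
def PosCyclic (a b c : UnitAddCircle) : Prop := arcLen a b < arcLen a c

/-- A formal orbit portrait of valence `N` with degrees `d`: a sequence of
`N`-element subsets `A m` of `ℝ/ℤ` such that `θ ↦ d_{m+1}·θ` maps `A m`
bijectively onto `A (m+1)` and carries every triple of pairwise distinct points
of `A m` in positive cyclic order to a triple in positive cyclic order. -/
def IsFormalPortrait (N : ℕ) (d : ℕ → ℕ) (A : ℕ → Set UnitAddCircle) : Prop :=
  ∀ m : ℕ,
    (A m).Finite ∧ (A m).ncard = N ∧
    Set.BijOn (fun θ => d (m + 1) • θ) (A m) (A (m + 1)) ∧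
    ∀ a ∈ A m, ∀ b ∈ A m, ∀ c ∈ A m, a ≠ b → a ≠ c → b ≠ c →
      PosCyclic a b c →
        PosCyclic (d (m + 1) • a) (d (m + 1) • b) (d (m + 1) • c)

/-- `(a,b)` is a complementary arc of `A`: `a, b ∈ A`, `a ≠ b`, and the open
arc `(a,b)` contains no point of `A`. -/
def IsComplArc (A : Set UnitAddCircle) (a b : UnitAddCircle) : Prop :=
  a ≠ b ∧ a ∈ A ∧ b ∈ A ∧ openArc a b ∩ A = ∅

lemma circle_coe_sub (x y : ℝ) :
    ((y : UnitAddCircle) - (x : UnitAddCircle)) = ((y - x : ℝ) : UnitAddCircle) :=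
  (AddCircle.coe_sub (1:ℝ) y x).symm

lemma arcLen_eq_fract {a b : UnitAddCircle} {r : ℝ} (h : b - a = (r : UnitAddCircle)) :
    arcLen a b = Int.fract r := by
  rw [arcLen, h, show ((r : ℝ) : UnitAddCircle) = (QuotientAddGroup.mk r : AddCircle (1:ℝ)) from
    rfl, AddCircle.coe_equivIco_mk_apply, div_one, mul_one]

lemma arcLen_coe (x y : ℝ) : arcLen (x : UnitAddCircle) y = Int.fract (y - x) :=
  arcLen_eq_fract (circle_coe_sub x y)

lemma coe_fract (t : ℝ) : ((Int.fract t : ℝ) : UnitAddCircle) = (t : UnitAddCircle) := by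
  have h : ((Int.fract t - t : ℝ) : UnitAddCircle) = 0 := by
    rw [AddCircle.coe_eq_zero_iff]
    refine ⟨-⌊t⌋, ?_⟩
    rw [zsmul_eq_mul, Int.fract]
    push_cast
    ring
  rw [← circle_coe_sub, sub_eq_zero] at h
  exact h

lemma arcLen_mem (a b : UnitAddCircle) : arcLen a b ∈ Set.Ico (0:ℝ) 1 := by
  have h := ((AddCircle.equivIco 1 0) (b - a)).2
  exact ⟨h.1, by have h2 := h.2; simp only [zero_add] at h2; exact h2⟩

lemma circle_coe_arcLen (a b : UnitAddCircle) :
    ((arcLen a b : ℝ) : UnitAddCircle) = b - a := by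
  obtain ⟨x, rfl⟩ := QuotientAddGroup.mk_surjective a
  obtain ⟨y, rfl⟩ := QuotientAddGroup.mk_surjective b
  rw [show (QuotientAddGroup.mk x : UnitAddCircle) = ((x:ℝ) : UnitAddCircle) from rfl,
      show (QuotientAddGroup.mk y : UnitAddCircle) = ((y:ℝ) : UnitAddCircle) from rfl] at *
  rw [arcLen_coe, coe_fract, circle_coe_sub]

lemma eq_add_arcLen (a b : UnitAddCircle) : b = a + ((arcLen a b : ℝ) : UnitAddCircle) := by
  rw [circle_coe_arcLen, add_sub_cancel]

lemma arcLen_eq_zero_iff {a b : UnitAddCircle} : arcLen a b = 0 ↔ a = b := by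
  constructor
  · intro h
    have h2 := circle_coe_arcLen a b
    rw [h] at h2
    rw [show ((0:ℝ) : UnitAddCircle) = 0 from rfl, eq_comm, sub_eq_zero, eq_comm] at h2
    exact h2
  · rintro rfl
    obtain ⟨x, rfl⟩ := QuotientAddGroup.mk_surjective a
    rw [show (QuotientAddGroup.mk x : UnitAddCircle) = ((x:ℝ) : UnitAddCircle) from rfl,
      arcLen_coe]
    simp

lemma arcLen_right_inj {a b c : UnitAddCircle} (h : arcLen a b = arcLen a c) : b = c := by
  rw [eq_add_arcLen a b, eq_add_arcLen a c, h]

lemma arcLen_add_coe (a : UnitAddCircle) {t : ℝ} (ht0 : 0 ≤ t) (ht1 : t < 1) :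
    arcLen a (a + (t : UnitAddCircle)) = t := by
  rw [arcLen_eq_fract (by rw [add_sub_cancel_left]), Int.fract_eq_self.mpr ⟨ht0, ht1⟩]

lemma mem_openArc_iff {a b x : UnitAddCircle} :
    x ∈ openArc a b ↔ x ≠ a ∧ arcLen a x < arcLen a b := by
  constructor
  · rintro ⟨t, ht0, htb, rfl⟩
    have ht1 : t < 1 := htb.trans (arcLen_mem a b).2
    have harc : arcLen a (a + (t : UnitAddCircle)) = t := arcLen_add_coe a ht0.le ht1
    refine ⟨?_, by rw [harc]; exact htb⟩
    intro h
    rw [h] at harc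
    rw [arcLen_eq_zero_iff.mpr rfl] at harc
    exact absurd harc.symm (ne_of_gt ht0)
  · rintro ⟨hxa, hlt⟩
    exact ⟨arcLen a x, lt_of_le_of_ne (arcLen_mem a x).1
      (fun h => hxa (arcLen_eq_zero_iff.mp h.symm).symm), hlt, eq_add_arcLen a x⟩

lemma arcLen_nsmul (n : ℕ) (a b : UnitAddCircle) :
    arcLen (n • a) (n • b) = Int.fract ((n : ℝ) * arcLen a b) := by
  apply arcLen_eq_fract
  rw [← smul_sub, ← circle_coe_arcLen a b, ← AddCircle.coe_nsmul]
  congr 1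
  rw [nsmul_eq_mul]

/-- The endpoints of a complementary arc of `A m` map to distinct points, the
image arc is a complementary arc of `A (m+1)`, and its length is
`d_{m+1}ℓ − ⌊d_{m+1}ℓ⌋`. -/
theorem complArc_image (N : ℕ) (hN : 2 ≤ N) (d : ℕ → ℕ) (hd : ∀ m, 1 ≤ m → 2 ≤ d m)
    (A : ℕ → Set UnitAddCircle) (hA : IsFormalPortrait N d A) (m : ℕ)
    (a b : UnitAddCircle) (hab : IsComplArc (A m) a b) :
    d (m + 1) • a ≠ d (m + 1) • b ∧
    IsComplArc (A (m + 1)) (d (m + 1) • a) (d (m + 1) • b) ∧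
    arcLen (d (m + 1) • a) (d (m + 1) • b) =
      (d (m + 1) : ℝ) * arcLen a b - ⌊(d (m + 1) : ℝ) * arcLen a b⌋₊ := by
  obtain ⟨hne, haA, hbA, hempty⟩ := hab
  obtain ⟨-, -, hbij, hord⟩ := hA m
  have hinj : d (m + 1) • a ≠ d (m + 1) • b := fun h => hne (hbij.injOn haA hbA h)
  refine ⟨hinj, ⟨hinj, hbij.mapsTo haA, hbij.mapsTo hbA, ?_⟩, ?_⟩
  · -- the image arc is empty of points of A (m+1)
    rw [Set.eq_empty_iff_forall_notMem]
    rintro y ⟨hyArc, hyA⟩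
    obtain ⟨c, hcA, rfl⟩ := hbij.surjOn hyA
    simp only at hyArc
    rw [mem_openArc_iff] at hyArc
    obtain ⟨hcne, hclt⟩ := hyArc
    have hca : c ≠ a := fun h => hcne (by rw [h])
    have hcb : c ≠ b := fun h => lt_irrefl _ (h ▸ hclt)
    have hcNot : c ∉ openArc a b := fun h =>
      Set.eq_empty_iff_forall_notMem.mp hempty c ⟨h, hcA⟩
    rw [mem_openArc_iff] at hcNot
    push_neg at hcNot
    have hge : arcLen a b ≤ arcLen a c := hcNot hca
    have hlt : arcLen a b < arcLen a c :=
      lt_of_le_of_ne hge (fun h => hcb (arcLen_right_inj h.symm))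
    have := hord a haA b hbA c hcA hne hca.symm (Ne.symm hcb) hlt
    exact absurd hclt (not_lt.mpr this.le)
  · -- length computation
    have hℓ : 0 ≤ (d (m + 1) : ℝ) * arcLen a b :=
      mul_nonneg (Nat.cast_nonneg _) (arcLen_mem a b).1
    rw [arcLen_nsmul, Int.fract]
    congr 1
    rw [← Int.natCast_floor_eq_floor hℓ]
    norm_num
end
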